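/- arXiv:2509.05308 — 3 statements merged into one kernel-verified Lean document; each statement's English description precedes it below -/
import Mathlib

section
/- If f : [0,∞) → ℝ satisfies the Abel integral equation k = ∫₀^y f(z)/√(y−z) dz for all y > 0, where k > 0 is a constant, then f(z) = k/(π√z) for all z > 0. -/
open MeasureTheory intervalIntegral Real Set Filter


lemma abel_hasDerivAt_T {a b y : ℝ} (hab : a < b) (hy : y ∈ Set.Ioo a b) :
    HasDerivAt (fun t => Real.arcsin ((2*t - (a+b))/(b-a)))
      (1/(Real.sqrt (y-a) * Real.sqrt (b-y))) y := by
  have hba : (0:ℝ) < b - a := by linarith [hy.1, hy.2]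
  have hya : (0:ℝ) < y - a := by linarith [hy.1]
  have hby : (0:ℝ) < b - y := by linarith [hy.2]
  set u : ℝ := (2*y - (a+b))/(b-a) with hu
  have hu1 : u < 1 := by
    rw [hu, div_lt_one hba]; linarith
  have hu2 : -1 < u := by
    rw [hu, lt_div_iff₀ hba]; linarith
  have h1 : HasDerivAt (fun t : ℝ => (2*t - (a+b))/(b-a)) (2/(b-a)) y := by
    have := (((hasDerivAt_id y).const_mul (2:ℝ)).sub_const (a+b)).div_const (b-a)
    simpa using this
  have h2 := Real.hasDerivAt_arcsin (ne_of_gt hu2) (ne_of_lt hu1)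
  have h3 := h2.comp y h1
  have key : (1:ℝ) - u^2 = 4*(y-a)*(b-y)/((b-a)^2) := by
    rw [hu]; field_simp; ring
  have hsq : Real.sqrt (1 - u^2) = 2 * Real.sqrt (y-a) * Real.sqrt (b-y) / (b-a) := by
    have h6 : 4*(y-a)*(b-y) = (2 * Real.sqrt (y-a) * Real.sqrt (b-y))^2 := by
      rw [mul_pow, mul_pow, Real.sq_sqrt hya.le, Real.sq_sqrt hby.le]; ring
    rw [key, h6, Real.sqrt_div (by positivity), Real.sqrt_sq (by positivity),
      Real.sqrt_sq hba.le]
  refine h3.congr_deriv ?_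
  rw [hsq]
  have h4 : Real.sqrt (y-a) ≠ 0 := by positivity
  have h5 : Real.sqrt (b-y) ≠ 0 := by positivity
  field_simp


lemma abel_kernel_integrable {a b : ℝ} (hab : a < b) :
    IntegrableOn (fun y => 1/(Real.sqrt (y-a) * Real.sqrt (b-y))) (Set.Ioo a b) := by
  have hmeas : Measurable fun y => 1/(Real.sqrt (y-a) * Real.sqrt (b-y)) := by
    simp only [one_div]
    exact (((Real.continuous_sqrt.comp (continuous_id.sub continuous_const)).mul
      (Real.continuous_sqrt.comp (continuous_const.sub continuous_id))).measurable).inv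
  set m : ℝ := (a+b)/2 with hm
  have ham : a < m := by rw [hm]; linarith
  have hmb : m < b := by rw [hm]; linarith
  have hC : (0:ℝ) < Real.sqrt ((b-a)/2) := Real.sqrt_pos.mpr (by linarith)
  -- left half
  have h1 : IntegrableOn (fun y => (Real.sqrt ((b-a)/2))⁻¹ * (y-a) ^ (-(1/2) : ℝ)) (Set.Ioc a m) := by
    have := (intervalIntegrable_rpow' (a := 0) (b := m - a) (r := -(1/2)) (by norm_num)).comp_sub_right a
    rw [intervalIntegrable_iff_integrableOn_Ioc_of_le (by linarith)] at this
    have h := this.const_mul ((Real.sqrt ((b-a)/2))⁻¹)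
    simp at h ⊢
    exact h
  have hleft : IntegrableOn (fun y => 1/(Real.sqrt (y-a) * Real.sqrt (b-y))) (Set.Ioc a m) := by
    refine Integrable.mono h1 (hmeas.aestronglyMeasurable.restrict) ?_
    rw [ae_restrict_iff' measurableSet_Ioc]
    refine ae_of_all _ fun y hy => ?_
    have hya : (0:ℝ) < y - a := by simp at hy; linarith [hy.1]
    have hby : Real.sqrt ((b-a)/2) ≤ Real.sqrt (b - y) := by
      apply Real.sqrt_le_sqrt; simp at hy; linarith [hy.2]
    have hk0 : (0:ℝ) ≤ 1/(Real.sqrt (y-a) * Real.sqrt (b-y)) := by positivity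
    rw [Real.norm_of_nonneg hk0, Real.norm_of_nonneg (by positivity)]
    rw [Real.rpow_neg hya.le, ← Real.sqrt_eq_rpow]
    rw [one_div, mul_inv, mul_comm ((Real.sqrt ((b-a)/2))⁻¹)]
    exact mul_le_mul_of_nonneg_left (inv_anti₀ hC hby) (by positivity)
  -- right half
  have h2 : IntegrableOn (fun y => (Real.sqrt ((b-a)/2))⁻¹ * (b-y) ^ (-(1/2) : ℝ)) (Set.Ioo m b) := by
    have := ((intervalIntegrable_rpow' (a := 0) (b := b - m) (r := -(1/2)) (by norm_num)).comp_sub_left b).symm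
    rw [show b - (b-m) = m by ring, sub_zero,
      intervalIntegrable_iff_integrableOn_Ioc_of_le (by linarith)] at this
    exact IntegrableOn.mono_set (this.const_mul _) Set.Ioo_subset_Ioc_self
  have hright : IntegrableOn (fun y => 1/(Real.sqrt (y-a) * Real.sqrt (b-y))) (Set.Ioo m b) := by
    refine Integrable.mono h2 (hmeas.aestronglyMeasurable.restrict) ?_
    rw [ae_restrict_iff' measurableSet_Ioo]
    refine ae_of_all _ fun y hy => ?_
    have hby : (0:ℝ) < b - y := by simp at hy; linarith [hy.2]
    have hya : Real.sqrt ((b-a)/2) ≤ Real.sqrt (y - a) := by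
      apply Real.sqrt_le_sqrt; simp at hy; linarith [hy.1]
    have hk0 : (0:ℝ) ≤ 1/(Real.sqrt (y-a) * Real.sqrt (b-y)) := by positivity
    rw [Real.norm_of_nonneg hk0, Real.norm_of_nonneg (by positivity)]
    rw [Real.rpow_neg hby.le, ← Real.sqrt_eq_rpow]
    rw [one_div, mul_inv, mul_comm ((Real.sqrt (y-a))⁻¹), mul_comm ((Real.sqrt ((b-a)/2))⁻¹)]
    exact mul_le_mul_of_nonneg_left (inv_anti₀ hC hya) (by positivity)
  exact (hleft.union hright).mono_set (fun y hy => by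
    rcases le_or_gt y m with h | h
    · exact Or.inl ⟨hy.1, h⟩
    · exact Or.inr ⟨h, hy.2⟩)

lemma abel_kernel_value {a b : ℝ} (hab : a < b) :
    ∫ y in Set.Ioo a b, 1/(Real.sqrt (y-a) * Real.sqrt (b-y)) = Real.pi := by
  set T : ℝ → ℝ := fun t => Real.arcsin ((2*t - (a+b))/(b-a)) with hT
  have hba : (0:ℝ) < b - a := by linarith
  -- FTC on compact subintervals
  have key : ∀ c d : ℝ, a < c → c ≤ d → d < b →
      ∫ y in Set.Ioo c d, 1/(Real.sqrt (y-a) * Real.sqrt (b-y)) = T d - T c := by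
    intro c d hac hcd hdb
    rw [← integral_Ioc_eq_integral_Ioo, ← intervalIntegral.integral_of_le hcd]
    refine intervalIntegral.integral_eq_sub_of_hasDerivAt (fun y hy => ?_) ?_
    · rw [Set.uIcc_of_le hcd] at hy
      exact abel_hasDerivAt_T hab ⟨lt_of_lt_of_le hac hy.1, lt_of_le_of_lt hy.2 hdb⟩
    · rw [intervalIntegrable_iff_integrableOn_Ioc_of_le hcd]
      refine (abel_kernel_integrable hab).mono_set fun y hy => ?_
      exact ⟨lt_of_lt_of_le hac hy.1.le, lt_of_le_of_lt hy.2 hdb⟩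
  -- approximating sequences
  set e : ℕ → ℝ := fun n => (b - a)/(n+3) with he
  have he0 : Tendsto e atTop (nhds 0) := by
    apply Tendsto.div_atTop tendsto_const_nhds
    exact tendsto_atTop_add_const_right _ 3 tendsto_natCast_atTop_atTop
  have hepos : ∀ n, 0 < e n := fun n => by
    apply div_pos hba; positivity
  have hesmall : ∀ n, e n < (b - a)/2 := fun n => by
    rw [he]; apply div_lt_div_of_pos_left hba (by norm_num)
    have h0 : (0:ℝ) ≤ (n:ℝ) := Nat.cast_nonneg n
    linarith
  have haseq : Tendsto (fun n => a + e n) atTop (nhds a) := by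
    simpa using (tendsto_const_nhds (x := a)).add he0
  have hbseq : Tendsto (fun n => b - e n) atTop (nhds b) := by
    simpa using (tendsto_const_nhds (x := b)).sub he0
  have hcover : AECover (volume.restrict (Set.Ioo a b)) atTop
      (fun n => Set.Ioo (a + e n) (b - e n)) :=
    MeasureTheory.aecover_Ioo_of_Ioo haseq hbseq
  refine hcover.integral_eq_of_tendsto _ ?_ ?_
  · exact abel_kernel_integrable hab
  · -- the sequence of integrals tends to π
    have heval : ∀ n, ∫ y in Set.Ioo (a + e n) (b - e n),
        1/(Real.sqrt (y-a) * Real.sqrt (b-y)) ∂(volume.restrict (Set.Ioo a b))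
        = T (b - e n) - T (a + e n) := by
      intro n
      have hsub : Set.Ioo (a + e n) (b - e n) ⊆ Set.Ioo a b := by
        apply Set.Ioo_subset_Ioo <;> nlinarith [hepos n]
      rw [Measure.restrict_restrict measurableSet_Ioo,
        Set.inter_eq_self_of_subset_left hsub]
      refine key _ _ (by nlinarith [hepos n]) (by nlinarith [hesmall n]) (by nlinarith [hepos n])
    simp only [heval]
    have hcont : Continuous (fun t : ℝ => T (b - t) - T (a + t)) := by
      apply Continuous.sub <;>
      exact Real.continuous_arcsin.comp (by continuity)
    have := (hcont.continuousAt (x := 0)).tendsto.comp he0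
    have hval : T (b - 0) - T (a + 0) = Real.pi := by
      rw [hT]
      simp only [sub_zero, add_zero]
      rw [show (2*b - (a+b))/(b-a) = 1 by rw [div_eq_one_iff_eq hba.ne']; ring,
        show (2*a - (a+b))/(b-a) = -1 by rw [div_eq_iff hba.ne']; ring]
      rw [Real.arcsin_one, Real.arcsin_neg_one]; ring
    rw [hval] at this
    exact this

/-- If `f` satisfies the Abel integral equation `k = ∫₀^y f(z)/√(y−z) dz` for all
`y > 0` with `k > 0` constant, then `f(z) = k/(π√z)` for all `z > 0`. -/
theorem abel_integral_equation_solution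
    (k : ℝ) (hk : 0 < k) (f : ℝ → ℝ)
    (hf : ContinuousOn f (Set.Ioi 0))
    (hint : ∀ y > (0:ℝ), IntervalIntegrable (fun z => f z / Real.sqrt (y - z))
      MeasureTheory.volume 0 y)
    (heq : ∀ y > (0:ℝ), ∫ z in (0:ℝ)..y, f z / Real.sqrt (y - z) = k) :
    ∀ z > (0:ℝ), f z = k / (Real.pi * Real.sqrt z) := by
  -- f is integrable on (0, x) for each x > 0
  have hfio : ∀ x > (0:ℝ), IntegrableOn f (Set.Ioo 0 x) := by
    intro x hx
    have h1 : IntegrableOn (fun z => f z / Real.sqrt (x - z)) (Set.Ioc 0 x) := by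
      rw [← intervalIntegrable_iff_integrableOn_Ioc_of_le hx.le]; exact hint x hx
    have h2 : IntegrableOn (fun z => Real.sqrt x * (f z / Real.sqrt (x - z))) (Set.Ioo 0 x) :=
      (h1.mono_set Set.Ioo_subset_Ioc_self).const_mul _
    refine Integrable.mono h2 ((hf.mono fun z hz => hz.1).aestronglyMeasurable measurableSet_Ioo) ?_
    rw [ae_restrict_iff' measurableSet_Ioo]
    refine ae_of_all _ fun z hz => ?_
    have hxz : (0:ℝ) < x - z := by linarith [hz.2]
    have hs : Real.sqrt (x - z) ≠ 0 := (Real.sqrt_pos.mpr hxz).ne'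
    rw [Real.norm_eq_abs, Real.norm_eq_abs, abs_mul, abs_div,
      abs_of_nonneg (Real.sqrt_nonneg x), abs_of_nonneg (Real.sqrt_nonneg (x-z))]
    rw [mul_div_assoc']
    rw [le_div_iff₀ (Real.sqrt_pos.mpr hxz)]
    have : Real.sqrt (x - z) ≤ Real.sqrt x := Real.sqrt_le_sqrt (by linarith [hz.1])
    calc |f z| * Real.sqrt (x - z) ≤ |f z| * Real.sqrt x := by
          exact mul_le_mul_of_nonneg_left this (abs_nonneg _)
      _ = Real.sqrt x * |f z| := mul_comm _ _
  -- the key identity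
  have key : ∀ x > (0:ℝ), Real.pi * ∫ z in Set.Ioo 0 x, f z = k * (2 * Real.sqrt x) := by
    intro x hx
    classical
    set g : ℝ → ℝ := (Set.Ioi (0:ℝ)).piecewise f (fun _ => 0) with hgdef
    have hg : Measurable g :=
      ContinuousOn.measurable_piecewise hf continuousOn_const measurableSet_Ioi
    have hgf : ∀ z : ℝ, 0 < z → g z = f z := fun z hz => Set.piecewise_eq_of_mem _ _ _ hz
    set S : Set (ℝ × ℝ) := {p | 0 < p.2 ∧ p.2 < p.1 ∧ p.1 < x} with hSdef
    have hS : MeasurableSet S := by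
      apply MeasurableSet.inter (measurableSet_lt measurable_const measurable_snd)
      exact MeasurableSet.inter (measurableSet_lt measurable_snd measurable_fst)
        (measurableSet_lt measurable_fst measurable_const)
    set G : ℝ × ℝ → ℝ :=
      S.indicator (fun p => g p.2 * (1/(Real.sqrt (p.1 - p.2) * Real.sqrt (x - p.1)))) with hGdef
    have hGmeas : AEStronglyMeasurable G (volume.prod volume) := by
      apply Measurable.aestronglyMeasurable
      apply Measurable.indicator _ hS
      apply (hg.comp measurable_snd).mul
      simp only [one_div]
      exact (((Real.continuous_sqrt.comp (continuous_fst.sub continuous_snd)).mul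
        (Real.continuous_sqrt.comp (continuous_const.sub continuous_fst))).measurable).inv
    -- slices in y (for fixed z)
    have hGy : ∀ z ∈ Set.Ioo (0:ℝ) x, (fun y => G (y, z)) =
        (Set.Ioo z x).indicator (fun y => g z * (1/(Real.sqrt (y - z) * Real.sqrt (x - y)))) := by
      intro z hz
      funext y
      by_cases hy : y ∈ Set.Ioo z x
      · rw [Set.indicator_of_mem hy, hGdef,
          Set.indicator_of_mem (show (y, z) ∈ S from ⟨hz.1, hy.1, hy.2⟩)]
      · rw [Set.indicator_of_notMem hy, hGdef, Set.indicator_of_notMem]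
        intro hmem
        exact hy ⟨hmem.2.1, hmem.2.2⟩
    have hGy0 : ∀ z : ℝ, z ∉ Set.Ioo (0:ℝ) x → (fun y => G (y, z)) = fun _ => (0:ℝ) := by
      intro z hz
      funext y
      rw [hGdef, Set.indicator_of_notMem]
      intro hmem
      exact hz ⟨hmem.1, lt_trans hmem.2.1 hmem.2.2⟩
    have hint_z : ∀ z : ℝ, Integrable (fun y => G (y, z)) volume := by
      intro z
      by_cases hz : z ∈ Set.Ioo (0:ℝ) x
      · rw [hGy z hz]
        exact IntegrableOn.integrable_indicator
          ((abel_kernel_integrable hz.2).const_mul (g z)) measurableSet_Ioo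
      · rw [hGy0 z hz]; exact integrable_zero _ _ _
    have hnormint : (fun z => ∫ y, ‖G (y, z)‖) =
        (Set.Ioo (0:ℝ) x).indicator (fun z => |g z| * Real.pi) := by
      funext z
      by_cases hz : z ∈ Set.Ioo (0:ℝ) x
      · rw [Set.indicator_of_mem hz]
        have hGy' : ∀ y : ℝ, G (y, z) = (Set.Ioo z x).indicator
            (fun y => g z * (1/(Real.sqrt (y - z) * Real.sqrt (x - y)))) y :=
          fun y => congrFun (hGy z hz) y
        simp only [hGy']
        have : ∀ y : ℝ, ‖(Set.Ioo z x).indicator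
            (fun y => g z * (1/(Real.sqrt (y - z) * Real.sqrt (x - y)))) y‖ =
            (Set.Ioo z x).indicator
            (fun y => |g z| * (1/(Real.sqrt (y - z) * Real.sqrt (x - y)))) y := by
          intro y
          by_cases hy : y ∈ Set.Ioo z x
          · rw [Set.indicator_of_mem hy, Set.indicator_of_mem hy, Real.norm_eq_abs, abs_mul,
              abs_of_nonneg (by positivity : (0:ℝ) ≤ 1/(Real.sqrt (y - z) * Real.sqrt (x - y)))]
          · rw [Set.indicator_of_notMem hy, Set.indicator_of_notMem hy, norm_zero]
        simp only [this]
        rw [MeasureTheory.integral_indicator measurableSet_Ioo, MeasureTheory.integral_const_mul,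
          abel_kernel_value hz.2]
      · rw [Set.indicator_of_notMem hz]
        have hGy' : ∀ y : ℝ, G (y, z) = 0 := fun y => congrFun (hGy0 z hz) y
        simp only [hGy', norm_zero, MeasureTheory.integral_zero]
    have hGint : Integrable G (volume.prod volume) := by
      rw [integrable_prod_iff' hGmeas]
      constructor
      · exact ae_of_all _ hint_z
      · rw [hnormint]
        apply (IntegrableOn.integrable_indicator _ measurableSet_Ioo)
        have h1 : IntegrableOn (fun z => |f z| * Real.pi) (Set.Ioo 0 x) :=
          (hfio x hx).abs.mul_const Real.pi
        exact h1.congr_fun (fun z hz => by rw [hgf z hz.1]) measurableSet_Ioo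
    -- Fubini
    have hswap : ∫ y, ∫ z, G (y, z) = ∫ z, ∫ y, G (y, z) := by
      have huncurry : Function.uncurry (fun y z => G (y, z)) = G := rfl
      exact MeasureTheory.integral_integral_swap (huncurry ▸ hGint)
    -- compute the y-outer side
    have hinner : ∀ y : ℝ, (∫ z, G (y, z)) =
        (Set.Ioo (0:ℝ) x).indicator (fun y => k / Real.sqrt (x - y)) y := by
      intro y
      by_cases hy : y ∈ Set.Ioo (0:ℝ) x
      · have hGz : (fun z => G (y, z)) =
            (Set.Ioo (0:ℝ) y).indicator (fun z => g z * (1/(Real.sqrt (y - z) * Real.sqrt (x - y)))) := by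
          funext z
          by_cases hz : z ∈ Set.Ioo (0:ℝ) y
          · rw [Set.indicator_of_mem hz, hGdef,
              Set.indicator_of_mem (show (y, z) ∈ S from ⟨hz.1, hz.2, hy.2⟩)]
          · rw [Set.indicator_of_notMem hz, hGdef, Set.indicator_of_notMem]
            intro hmem
            exact hz ⟨hmem.1, hmem.2.1⟩
        rw [Set.indicator_of_mem hy, hGz, MeasureTheory.integral_indicator measurableSet_Ioo]
        have hcongr : ∀ z ∈ Set.Ioo (0:ℝ) y,
            g z * (1/(Real.sqrt (y - z) * Real.sqrt (x - y)))
            = (f z / Real.sqrt (y - z)) * (Real.sqrt (x - y))⁻¹ := by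
          intro z hz
          rw [hgf z hz.1, one_div, mul_inv, div_eq_mul_inv]
          ring
        rw [setIntegral_congr_fun measurableSet_Ioo hcongr, MeasureTheory.integral_mul_const,
          ← integral_Ioc_eq_integral_Ioo, ← intervalIntegral.integral_of_le hy.1.le,
          heq y hy.1, div_eq_mul_inv]
      · rw [Set.indicator_of_notMem hy]
        have : (fun z => G (y, z)) = fun _ => (0:ℝ) := by
          funext z
          rw [hGdef, Set.indicator_of_notMem]
          intro hmem
          exact hy ⟨lt_trans hmem.1 hmem.2.1, hmem.2.2⟩
        rw [this, MeasureTheory.integral_zero]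
    -- compute the z-outer side
    have houter : ∀ z : ℝ, (∫ y, G (y, z)) =
        (Set.Ioo (0:ℝ) x).indicator (fun z => f z * Real.pi) z := by
      intro z
      by_cases hz : z ∈ Set.Ioo (0:ℝ) x
      · rw [Set.indicator_of_mem hz, hGy z hz, MeasureTheory.integral_indicator measurableSet_Ioo,
          MeasureTheory.integral_const_mul, abel_kernel_value hz.2, hgf z hz.1, mul_comm]
      · rw [Set.indicator_of_notMem hz, hGy0 z hz, MeasureTheory.integral_zero]
    -- put it together
    have lhs : ∫ y, ∫ z, G (y, z) = k * (2 * Real.sqrt x) := by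
      simp only [hinner]
      rw [MeasureTheory.integral_indicator measurableSet_Ioo]
      have hcongr : ∀ y ∈ Set.Ioo (0:ℝ) x,
          k / Real.sqrt (x - y) = k * (x - y) ^ (-(1/2) : ℝ) := by
        intro y hy
        have hxy : (0:ℝ) < x - y := by linarith [hy.2]
        rw [Real.rpow_neg hxy.le, ← Real.sqrt_eq_rpow, div_eq_mul_inv]
      rw [setIntegral_congr_fun measurableSet_Ioo hcongr, MeasureTheory.integral_const_mul,
        ← integral_Ioc_eq_integral_Ioo, ← intervalIntegral.integral_of_le hx.le]
      rw [show (fun y : ℝ => (x - y) ^ (-(1/2) : ℝ)) = fun y => (fun t : ℝ => t ^ (-(1/2) : ℝ)) (x - y) from rfl]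
      rw [intervalIntegral.integral_comp_sub_left (fun t : ℝ => t ^ (-(1/2) : ℝ)) x]
      rw [sub_self, sub_zero, integral_rpow (Or.inl (by norm_num))]
      rw [show (-(1/2) : ℝ) + 1 = 1/2 by norm_num, Real.zero_rpow (by norm_num)]
      rw [← Real.sqrt_eq_rpow]
      ring
    have rhs : ∫ z, ∫ y, G (y, z) = Real.pi * ∫ z in Set.Ioo 0 x, f z := by
      simp only [houter]
      rw [MeasureTheory.integral_indicator measurableSet_Ioo, MeasureTheory.integral_mul_const]
      ring
    rw [← rhs, ← hswap, lhs]
  -- conclude by differentiation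
  intro z hz
  have hF1 : HasDerivAt (fun t => ∫ u in (0:ℝ)..t, f u) (f z) z := by
    refine intervalIntegral.integral_hasDerivAt_right ?_ ?_ ?_
    · rw [intervalIntegrable_iff_integrableOn_Ioc_of_le hz.le,
        integrableOn_Ioc_iff_integrableOn_Ioo]
      exact hfio z hz
    · exact ContinuousOn.stronglyMeasurableAtFilter isOpen_Ioi hf z hz
    · exact hf.continuousAt (isOpen_Ioi.mem_nhds hz)
  have hF2 : HasDerivAt (fun t => ∫ u in (0:ℝ)..t, f u) (2 * k / Real.pi * (1/(2 * Real.sqrt z))) z := by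
    have hd : HasDerivAt (fun t => 2 * k / Real.pi * Real.sqrt t)
        (2 * k / Real.pi * (1/(2 * Real.sqrt z))) z :=
      (Real.hasDerivAt_sqrt (ne_of_gt hz)).const_mul _
    refine hd.congr_of_eventuallyEq ?_
    filter_upwards [isOpen_Ioi.mem_nhds hz] with t ht
    have hxt : (0:ℝ) < t := ht
    have := key t hxt
    rw [intervalIntegral.integral_of_le hxt.le, integral_Ioc_eq_integral_Ioo]
    have hpi := Real.pi_ne_zero
    field_simp at this ⊢
    linarith [this]
  have := hF1.unique hF2
  rw [this]
  have hsz : Real.sqrt z ≠ 0 := (Real.sqrt_pos.mpr hz).ne'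
  field_simp
end

section
/- The descent time along the inverted cycloid x(θ) = r(θ + sin θ), y(θ) = r(1 − cos θ), from any starting angle θ₀ ∈ (0, π) (at height y₀ = y(θ₀)) down to the vertex θ = 0, equals π√(r/g), independent of θ₀. -/
open MeasureTheory intervalIntegral Real

/-- Tautochrone property: the descent time along the inverted cycloid from any angle
`θ₀ ∈ (0, π)` to the vertex equals `π√(r/g)`, independent of `θ₀`. -/
theorem cycloid_tautochrone
    (r g : ℝ) (hr : 0 < r) (hg : 0 < g)
    (x y : ℝ → ℝ)
    (hx : x = fun θ => r * (θ + Real.sin θ))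
    (hy : y = fun θ => r * (1 - Real.cos θ)) :
    ∀ θ₀ ∈ Set.Ioo 0 Real.pi,
      (∫ θ in (0:ℝ)..θ₀,
        Real.sqrt ((deriv x θ) ^ 2 + (deriv y θ) ^ 2) /
          Real.sqrt (2 * g * (y θ₀ - y θ)))
        = Real.pi * Real.sqrt (r / g) := by
  rintro θ₀ ⟨hθ₀0, hθ₀π⟩
  have hπ := Real.pi_pos
  set a := Real.sin (θ₀ / 2) with ha_def
  have ha : 0 < a := Real.sin_pos_of_pos_of_lt_pi (by linarith) (by linarith)
  set c := Real.sqrt (r / g) with hc_def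
  have hc : 0 < c := Real.sqrt_pos.2 (div_pos hr hg)
  have hgr : (0:ℝ) < Real.sqrt (g * r) := Real.sqrt_pos.2 (mul_pos hg hr)
  have hcgr : c * Real.sqrt (g * r) = r := by
    rw [hc_def, ← Real.sqrt_mul (div_pos hr hg).le]
    rw [show r / g * (g * r) = r ^ 2 by field_simp]
    exact Real.sqrt_sq hr.le
  set F : ℝ → ℝ := fun θ => 2 * c * Real.arcsin (Real.sin (θ / 2) / a) with hF_def
  set f : ℝ → ℝ := fun θ =>
      Real.sqrt ((deriv x θ) ^ 2 + (deriv y θ) ^ 2) /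
        Real.sqrt (2 * g * (y θ₀ - y θ)) with hf_def
  -- pointwise derivative
  have hder : ∀ θ ∈ Set.Ioo (0:ℝ) θ₀, HasDerivAt F (f θ) θ := by
    rintro θ ⟨hθ0, hθθ₀⟩
    set s := Real.sin (θ / 2) with hs_def
    have hs0 : 0 < s := Real.sin_pos_of_pos_of_lt_pi (by linarith) (by linarith)
    have hsa : s < a := by
      apply Real.strictMonoOn_sin ⟨by linarith, by linarith⟩ ⟨by linarith, by linarith⟩
      linarith
    have hD : 0 < a ^ 2 - s ^ 2 := by nlinarith
    have hsqD : 0 < Real.sqrt (a ^ 2 - s ^ 2) := Real.sqrt_pos.2 hD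
    -- derivatives of x and y
    have hdx : HasDerivAt x (r * (1 + Real.cos θ)) θ := by
      rw [hx]
      exact ((hasDerivAt_id θ).add (Real.hasDerivAt_sin θ)).const_mul r
    have hdy : HasDerivAt y (r * Real.sin θ) θ := by
      rw [hy]
      have := ((hasDerivAt_const θ (1:ℝ)).sub (Real.hasDerivAt_cos θ)).const_mul r
      refine this.congr_deriv ?_
      ring
    have hcosθ : Real.cos θ = 2 * Real.cos (θ / 2) ^ 2 - 1 := by
      rw [show θ = 2 * (θ / 2) by ring, Real.cos_two_mul]
      ring_nf
    have hcosθ' : Real.cos θ = 1 - 2 * s ^ 2 := by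
      rw [hcosθ, hs_def]
      linear_combination 2 * Real.sin_sq_add_cos_sq (θ / 2)
    have hcosθ₀ : Real.cos θ₀ = 1 - 2 * a ^ 2 := by
      rw [show θ₀ = 2 * (θ₀ / 2) by ring, Real.cos_two_mul, ha_def]
      linear_combination 2 * Real.sin_sq_add_cos_sq (θ₀ / 2)
    have hcosh : 0 < Real.cos (θ / 2) :=
      Real.cos_pos_of_mem_Ioo ⟨by linarith, by linarith⟩
    -- numerator
    have hnum : Real.sqrt ((deriv x θ) ^ 2 + (deriv y θ) ^ 2) = 2 * r * Real.cos (θ / 2) := by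
      rw [hdx.deriv, hdy.deriv]
      rw [show (r * (1 + Real.cos θ)) ^ 2 + (r * Real.sin θ) ^ 2
          = (2 * r * Real.cos (θ / 2)) ^ 2 by
        linear_combination (r ^ 2) * Real.sin_sq_add_cos_sq θ + (2 * r ^ 2) * hcosθ]
      exact Real.sqrt_sq (by positivity)
    -- denominator
    have hden : Real.sqrt (2 * g * (y θ₀ - y θ))
        = 2 * Real.sqrt (g * r) * Real.sqrt (a ^ 2 - s ^ 2) := by
      have h1 : Real.sqrt (g * r) ^ 2 = g * r := Real.sq_sqrt (mul_pos hg hr).le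
      have h2 : Real.sqrt (a ^ 2 - s ^ 2) ^ 2 = a ^ 2 - s ^ 2 := Real.sq_sqrt hD.le
      rw [show 2 * g * (y θ₀ - y θ)
          = (2 * Real.sqrt (g * r) * Real.sqrt (a ^ 2 - s ^ 2)) ^ 2 by
        rw [hy]
        simp only
        rw [hcosθ', hcosθ₀, mul_pow, mul_pow, h1, h2]
        ring]
      exact Real.sqrt_sq (by positivity)
    have hfval : f θ = 2 * r * Real.cos (θ / 2)
        / (2 * Real.sqrt (g * r) * Real.sqrt (a ^ 2 - s ^ 2)) := by
      rw [hf_def]; simp only; rw [hnum, hden]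
    have hfval2 : f θ = c * Real.cos (θ / 2) / Real.sqrt (a ^ 2 - s ^ 2) := by
      rw [hfval, div_eq_div_iff (by positivity) hsqD.ne']
      linear_combination (-(2 * Real.cos (θ / 2) * Real.sqrt (a ^ 2 - s ^ 2))) * hcgr
    -- derivative of F
    have hu : HasDerivAt (fun θ : ℝ => Real.sin (θ / 2) / a)
        (Real.cos (θ / 2) * (1 / 2) / a) θ := by
      have h1 : HasDerivAt (fun θ : ℝ => θ / 2) (1 / 2) θ := (hasDerivAt_id θ).div_const 2
      exact ((Real.hasDerivAt_sin (θ / 2)).comp θ h1).div_const a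
    have hlt1 : s / a < 1 := (div_lt_one ha).2 hsa
    have hgt0 : 0 < s / a := div_pos hs0 ha
    have hdF : HasDerivAt F
        ((2 * c) * (1 / Real.sqrt (1 - (s / a) ^ 2) * (Real.cos (θ / 2) * (1 / 2) / a))) θ :=
      ((Real.hasDerivAt_arcsin (by linarith) (ne_of_lt hlt1)).comp θ hu).const_mul (2 * c)
    have hsq1 : Real.sqrt (1 - (s / a) ^ 2) = Real.sqrt (a ^ 2 - s ^ 2) / a := by
      rw [show 1 - (s / a) ^ 2 = (a ^ 2 - s ^ 2) / a ^ 2 by field_simp,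
        Real.sqrt_div hD.le, Real.sqrt_sq ha.le]
    have hEq : (2 * c) * (1 / Real.sqrt (1 - (s / a) ^ 2) * (Real.cos (θ / 2) * (1 / 2) / a))
        = f θ := by
      rw [hsq1, hfval2]
      field_simp
    exact hEq ▸ hdF
  -- continuity of F
  have hFcont : Continuous F := by
    apply Continuous.mul continuous_const
    exact Real.continuous_arcsin.comp
      ((Real.continuous_sin.comp (continuous_id.div_const 2)).div_const a)
  have hle : (0:ℝ) ≤ θ₀ := hθ₀0.le
  have hint : IntervalIntegrable f volume 0 θ₀ := by
    apply intervalIntegrable_deriv_of_nonneg (g := F)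
    · exact hFcont.continuousOn
    · rwa [min_eq_left hle, max_eq_right hle]
    · intro θ _
      exact div_nonneg (Real.sqrt_nonneg _) (Real.sqrt_nonneg _)
  have key := intervalIntegral.integral_eq_sub_of_hasDeriv_right_of_le hle
    hFcont.continuousOn (fun θ hθ => (hder θ hθ).hasDerivWithinAt) hint
  rw [hf_def] at key
  simp only at key
  rw [key, hF_def]
  simp only
  rw [show (0:ℝ) / 2 = 0 by norm_num, Real.sin_zero, zero_div, Real.arcsin_zero,
    div_self (ne_of_gt ha), Real.arcsin_one]
  ring
end

section
/- Left-inverse property: for 0 < α < 1 and f continuous on [0,∞), the Riemann–Liouville fractional derivative of order α applied to the Riemann–Liouville fractional integral of order α of f recovers f: D^α(I^α f)(x) = f(x) for x > 0. -/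
open MeasureTheory intervalIntegral Real

/-- Riemann–Liouville fractional integral with base point 0. -/
noncomputable def RLint (α : ℝ) (f : ℝ → ℝ) (x : ℝ) : ℝ :=
  (1 / Real.Gamma α) * ∫ t in (0:ℝ)..x, (x - t) ^ (α - 1) * f t

/-- Riemann–Liouville fractional derivative of order `α ∈ (0,1)` with base point 0. -/
noncomputable def RLderiv (α : ℝ) (g : ℝ → ℝ) (x : ℝ) : ℝ :=
  (1 / Real.Gamma (1 - α)) * deriv (fun u => ∫ t in (0:ℝ)..u, (u - t) ^ (-α) * g t) x

lemma beta01 {α : ℝ} (hα0 : 0 < α) (hα1 : α < 1) :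
    ∫ r in (0:ℝ)..1, r ^ (α - 1) * (1 - r) ^ (-α) = Real.Gamma α * Real.Gamma (1 - α) := by
  have hs : 0 < (α : ℂ).re := by simpa using hα0
  have ht : 0 < ((1 - α : ℝ) : ℂ).re := by simpa using sub_pos.mpr hα1
  have h := Complex.Gamma_mul_Gamma_eq_betaIntegral hs ht
  have hsum : ((α : ℂ)) + ((1 - α : ℝ) : ℂ) = 1 := by push_cast; ring
  rw [hsum, Complex.Gamma_one, one_mul] at h
  have hbeta : Complex.betaIntegral (α : ℂ) ((1 - α : ℝ) : ℂ)
      = ((∫ r in (0:ℝ)..1, r ^ (α - 1) * (1 - r) ^ (-α) : ℝ) : ℂ) := by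
    rw [Complex.betaIntegral, ← intervalIntegral.integral_ofReal]
    refine intervalIntegral.integral_congr fun x hx => ?_
    rw [Set.uIcc_of_le (by norm_num : (0:ℝ) ≤ 1)] at hx
    rw [show ((α:ℂ) - 1) = ((α - 1 : ℝ) : ℂ) by push_cast; ring,
      show (((1 - α : ℝ):ℂ) - 1) = ((-α : ℝ) : ℂ) by push_cast; ring,
      show (1 - (x:ℂ)) = ((1 - x : ℝ) : ℂ) by push_cast; ring,
      Complex.ofReal_mul, ← Complex.ofReal_cpow hx.1,
      ← Complex.ofReal_cpow (by linarith [hx.2] : (0:ℝ) ≤ 1 - x)]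
  rw [hbeta] at h
  have := congrArg Complex.re h
  rw [Complex.Gamma_ofReal, Complex.Gamma_ofReal, ← Complex.ofReal_mul] at this
  simpa using this.symm

lemma betaInner {α s u : ℝ} (hα0 : 0 < α) (hα1 : α < 1) (hsu : s < u) :
    ∫ t in s..u, (u - t) ^ (-α) * (t - s) ^ (α - 1)
      = Real.Gamma α * Real.Gamma (1 - α) := by
  have hcpos : 0 < u - s := sub_pos.mpr hsu
  have h1 := intervalIntegral.integral_comp_mul_add (a := 0) (b := 1)
      (fun t => (u - t) ^ (-α) * (t - s) ^ (α - 1)) hcpos.ne' s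
  simp only [mul_zero, zero_add, mul_one, sub_add_cancel] at h1
  have hcc : (u - s) ^ (-α) * (u - s) ^ (α - 1) = (u - s)⁻¹ := by
    rw [← Real.rpow_add hcpos, show -α + (α - 1) = -1 by ring, Real.rpow_neg_one]
  have h2 : ∫ r in (0:ℝ)..1, (u - ((u - s) * r + s)) ^ (-α) * ((u - s) * r + s - s) ^ (α - 1)
      = (u - s)⁻¹ * (Real.Gamma α * Real.Gamma (1 - α)) := by
    rw [← beta01 hα0 hα1, ← intervalIntegral.integral_const_mul]
    refine intervalIntegral.integral_congr fun r hr => ?_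
    rw [Set.uIcc_of_le (by norm_num : (0:ℝ) ≤ 1)] at hr
    have e1 : u - ((u - s) * r + s) = (u - s) * (1 - r) := by ring
    have e2 : (u - s) * r + s - s = (u - s) * r := by ring
    rw [e1, e2, Real.mul_rpow hcpos.le (by linarith [hr.2]),
      Real.mul_rpow hcpos.le hr.1, ← hcc]
    ring
  rw [h2] at h1
  have := h1.symm
  rw [smul_eq_mul] at this
  exact mul_left_cancel₀ (inv_ne_zero hcpos.ne') this

lemma rpow_int_eval {α t : ℝ} (hα0 : 0 < α) (ht : 0 ≤ t) :
    ∫ s in Set.Ioc (0:ℝ) t, (t - s) ^ (α - 1) = t ^ α / α := by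
  rw [← intervalIntegral.integral_of_le ht,
    intervalIntegral.integral_comp_sub_left (fun x => x ^ (α - 1)) t]
  simp only [sub_self, sub_zero]
  rw [integral_rpow (Or.inl (by linarith : (-1:ℝ) < α - 1))]
  have h1 : α - 1 + 1 = α := by ring
  rw [h1, Real.zero_rpow hα0.ne', sub_zero]

lemma key {α : ℝ} (hα0 : 0 < α) (hα1 : α < 1) {f : ℝ → ℝ} (hf : ContinuousOn f (Set.Ici 0))
    {u : ℝ} (hu : 0 < u) :
    ∫ t in (0:ℝ)..u, (u - t) ^ (-α) * RLint α f t
      = Real.Gamma (1 - α) * ∫ s in (0:ℝ)..u, f s := by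
  set A : Set ℝ := Set.Ioc (0:ℝ) u with hA
  set F : ℝ → ℝ → ℝ := fun t s => (u - t) ^ (-α) * ((t - s) ^ (α - 1) * f s) with hF
  set G : ℝ × ℝ → ℝ :=
    Set.indicator {p : ℝ × ℝ | p.2 ≤ p.1} (fun p => F p.1 p.2) with hG
  set μ : Measure ℝ := volume.restrict A with hμ
  have hAt : ∀ t ∈ A, Set.Iic t ∩ A = Set.Ioc 0 t := by
    intro t ht
    ext s
    simp only [Set.mem_inter_iff, Set.mem_Iic, hA, Set.mem_Ioc]
    exact ⟨fun ⟨h1, h2, h3⟩ => ⟨h2, h1⟩, fun ⟨h1, h2⟩ => ⟨h2, h1, h2.trans ht.2⟩⟩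
  -- bound for f on [0, u]
  obtain ⟨M, hM⟩ : ∃ M, ∀ s ∈ Set.Icc (0:ℝ) u, |f s| ≤ M := by
    obtain ⟨M, hM⟩ := isCompact_Icc.exists_bound_of_continuousOn
      (hf.mono (Set.Icc_subset_Ici_self : Set.Icc (0:ℝ) u ⊆ _))
    exact ⟨M, fun s hs => hM s hs⟩
  have hM0 : 0 ≤ M := le_trans (abs_nonneg _) (hM u ⟨hu.le, le_refl u⟩)
  have hfA : AEStronglyMeasurable f μ :=
    (hf.mono (fun x hx => le_of_lt hx.1)).aestronglyMeasurable measurableSet_Ioc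
  have hFm : AEStronglyMeasurable (fun p : ℝ × ℝ => F p.1 p.2) (μ.prod μ) := by
    apply AEStronglyMeasurable.mul
    · exact (by fun_prop : Measurable (fun p : ℝ × ℝ => (u - p.1) ^ (-α))).aestronglyMeasurable
    · exact ((by fun_prop : Measurable (fun p : ℝ × ℝ =>
        (p.1 - p.2) ^ (α - 1))).aestronglyMeasurable).mul hfA.comp_snd
  have hGm : AEStronglyMeasurable G (μ.prod μ) :=
    hFm.indicator (measurableSet_le measurable_snd measurable_fst)
  -- sections of G are integrable
  have hGsec : ∀ t, (fun s => G (t, s)) = Set.indicator (Set.Iic t) (fun s => F t s) := by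
    intro t; funext s
    simp only [hG, Set.indicator_apply, Set.mem_setOf_eq, Set.mem_Iic]
  have hsec : ∀ t ∈ A, Integrable (fun s => G (t, s)) μ := by
    intro t ht
    rw [hGsec t, hμ, integrable_indicator_iff measurableSet_Iic, IntegrableOn,
      Measure.restrict_restrict measurableSet_Iic, hAt t ht]
    apply Integrable.const_mul
    have hint : IntegrableOn (fun s => (t - s) ^ (α - 1)) (Set.Ioc 0 t) volume := by
      have := ((intervalIntegrable_rpow' (show (-1:ℝ) < α - 1 by linarith)
        (a := 0) (b := t)).comp_sub_left t).symm
      simpa [intervalIntegrable_iff_integrableOn_Ioc_of_le ht.1.le] using this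
    have hfm2 : AEStronglyMeasurable f (volume.restrict (Set.Ioc 0 t)) :=
      (hf.mono (fun x hx => le_of_lt hx.1)).aestronglyMeasurable measurableSet_Ioc
    have hbound : ∀ᵐ s ∂volume.restrict (Set.Ioc 0 t), ‖f s‖ ≤ M := by
      filter_upwards [ae_restrict_mem measurableSet_Ioc] with s hs
      exact hM s ⟨hs.1.le, hs.2.trans ht.2⟩
    have := Integrable.bdd_mul hint hfm2 hbound
    simpa [mul_comm] using this
  -- the norm-integral bound
  have hGint : Integrable G (μ.prod μ) := by
    rw [integrable_prod_iff hGm]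
    constructor
    · filter_upwards [ae_restrict_mem measurableSet_Ioc] with t ht
      exact hsec t ht
    · have hmeas : AEStronglyMeasurable (fun t => ∫ s, ‖G (t, s)‖ ∂μ) μ :=
        hGm.norm.integral_prod_right'
      have hdom : Integrable (fun t => M * (u ^ α / α) * (u - t) ^ (-α)) μ := by
        apply Integrable.const_mul
        have := ((intervalIntegrable_rpow' (show (-1:ℝ) < -α by linarith)
          (a := 0) (b := u)).comp_sub_left u).symm
        rw [hμ, ← IntegrableOn]
        simpa [intervalIntegrable_iff_integrableOn_Ioc_of_le hu.le] using this
      apply hdom.mono' hmeas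
      filter_upwards [ae_restrict_mem measurableSet_Ioc] with t ht
      rw [Real.norm_eq_abs, abs_of_nonneg (integral_nonneg fun s => norm_nonneg _)]
      have h1 : 0 ≤ (u - t) ^ (-α) := Real.rpow_nonneg (by linarith [ht.2]) _
      have hind : Integrable
          (Set.indicator (Set.Iic t) (fun s => (u - t) ^ (-α) * ((t - s) ^ (α - 1) * M))) μ := by
        rw [hμ, integrable_indicator_iff measurableSet_Iic, IntegrableOn,
          Measure.restrict_restrict measurableSet_Iic, hAt t ht]
        apply Integrable.const_mul
        apply Integrable.mul_const
        have := ((intervalIntegrable_rpow' (show (-1:ℝ) < α - 1 by linarith)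
          (a := 0) (b := t)).comp_sub_left t).symm
        simpa [intervalIntegrable_iff_integrableOn_Ioc_of_le ht.1.le, IntegrableOn] using this
      have step : ∫ s, ‖G (t, s)‖ ∂μ
          ≤ ∫ s, Set.indicator (Set.Iic t) (fun s => (u - t) ^ (-α) * ((t - s) ^ (α - 1) * M)) s ∂μ := by
        apply integral_mono_of_nonneg (Filter.Eventually.of_forall fun s => norm_nonneg _) hind
        filter_upwards [ae_restrict_mem measurableSet_Ioc] with s hs
        rw [congrFun (hGsec t) s]
        by_cases hst : s ≤ t
        · simp only [Set.indicator_apply, Set.mem_Iic, hst, if_true]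
          rw [Real.norm_eq_abs, hF]
          have h2 : 0 ≤ (t - s) ^ (α - 1) := Real.rpow_nonneg (by linarith) _
          rw [abs_mul, abs_mul, abs_of_nonneg h1, abs_of_nonneg h2]
          exact mul_le_mul_of_nonneg_left
            (mul_le_mul_of_nonneg_left (hM s ⟨hs.1.le, hs.2⟩) h2) h1
        · simp [Set.indicator_apply, hst]
      refine step.trans ?_
      rw [hμ, MeasureTheory.integral_indicator measurableSet_Iic,
        Measure.restrict_restrict measurableSet_Iic, hAt t ht,
        MeasureTheory.integral_const_mul]
      have : ∫ s in Set.Ioc (0:ℝ) t, (t - s) ^ (α - 1) * M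
          = (t ^ α / α) * M := by
        rw [MeasureTheory.integral_mul_const, rpow_int_eval hα0 ht.1.le]
      rw [this]
      rw [show M * (u ^ α / α) * (u - t) ^ (-α) = (u - t) ^ (-α) * (u ^ α / α * M) by ring]
      apply mul_le_mul_of_nonneg_left _ h1
      apply mul_le_mul_of_nonneg_right _ hM0
      have h3 : t ^ α ≤ u ^ α := Real.rpow_le_rpow ht.1.le ht.2 hα0.le
      gcongr
  -- step A: rewrite the outer integrand
  have stepA : ∀ t ∈ A, (u - t) ^ (-α) * RLint α f t
      = (1 / Real.Gamma α) * ∫ s, G (t, s) ∂μ := by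
    intro t ht
    have h1 : ∫ s, G (t, s) ∂μ = ∫ s in Set.Ioc (0:ℝ) t, F t s := by
      rw [hGsec t, hμ, MeasureTheory.integral_indicator measurableSet_Iic,
        Measure.restrict_restrict measurableSet_Iic, hAt t ht]
    rw [h1, RLint, intervalIntegral.integral_of_le ht.1.le, hF]
    simp only []
    rw [MeasureTheory.integral_const_mul]
    ring
  -- step C: the inner integral after swapping
  have hne : ∀ᵐ s ∂μ, s ≠ u := by
    refine Filter.Eventually.filter_mono (ae_mono Measure.restrict_le_self) ?_
    rw [Filter.eventually_iff, mem_ae_iff]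
    simp only [ne_eq, Set.compl_setOf, not_not]
    have : {x : ℝ | x = u} = {u} := by ext y; simp
    rw [this]
    exact measure_singleton u
  have stepC : ∀ᵐ s ∂μ, (∫ t, G (t, s) ∂μ)
      = Real.Gamma α * Real.Gamma (1 - α) * f s := by
    filter_upwards [ae_restrict_mem measurableSet_Ioc, hne] with s hs hsne
    have hsu' : s < u := lt_of_le_of_ne hs.2 hsne
    have h2 : (fun t => G (t, s)) = Set.indicator (Set.Ici s) (fun t => F t s) := by
      funext t
      simp only [hG, Set.indicator_apply, Set.mem_setOf_eq, Set.mem_Ici]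
    have h3 : Set.Ici s ∩ A = Set.Icc s u := by
      ext t
      simp only [Set.mem_inter_iff, Set.mem_Ici, hA, Set.mem_Ioc, Set.mem_Icc]
      exact ⟨fun ⟨ha, hb, hc⟩ => ⟨ha, hc⟩, fun ⟨ha, hb⟩ => ⟨ha, lt_of_lt_of_le hs.1 ha, hb⟩⟩
    rw [h2, hμ, MeasureTheory.integral_indicator measurableSet_Ici,
      Measure.restrict_restrict measurableSet_Ici, h3,
      MeasureTheory.integral_Icc_eq_integral_Ioc, ← intervalIntegral.integral_of_le hsu'.le]
    have h4 : ∫ t in s..u, F t s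
        = ∫ t in s..u, ((u - t) ^ (-α) * (t - s) ^ (α - 1)) * f s := by
      refine intervalIntegral.integral_congr fun t _ => ?_
      rw [hF]; ring
    rw [h4, intervalIntegral.integral_mul_const, betaInner hα0 hα1 hsu']
  -- assemble
  have hGint' : Integrable (Function.uncurry fun t s => G (t, s)) (μ.prod μ) := hGint
  have hΓ : Real.Gamma α ≠ 0 := (Real.Gamma_pos_of_pos hα0).ne'
  rw [intervalIntegral.integral_of_le hu.le, intervalIntegral.integral_of_le hu.le]
  calc ∫ t in Set.Ioc (0:ℝ) u, (u - t) ^ (-α) * RLint α f t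
      = ∫ t, (1 / Real.Gamma α) * ∫ s, G (t, s) ∂μ ∂μ :=
        setIntegral_congr_fun measurableSet_Ioc stepA
    _ = (1 / Real.Gamma α) * ∫ t, ∫ s, G (t, s) ∂μ ∂μ := MeasureTheory.integral_const_mul _ _
    _ = (1 / Real.Gamma α) * ∫ s, ∫ t, G (t, s) ∂μ ∂μ := by
        rw [MeasureTheory.integral_integral_swap hGint']
    _ = (1 / Real.Gamma α) * ∫ s, Real.Gamma α * Real.Gamma (1 - α) * f s ∂μ := by
        rw [integral_congr_ae stepC]
    _ = (1 / Real.Gamma α) * (Real.Gamma α * Real.Gamma (1 - α) * ∫ s, f s ∂μ) := by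
        rw [MeasureTheory.integral_const_mul]
    _ = Real.Gamma (1 - α) * ∫ s in Set.Ioc (0:ℝ) u, f s := by
        rw [hμ, hA]
        field_simp

/-- Left-inverse property: for `0 < α < 1` and `f` continuous on `[0,∞)`,
`D^α(I^α f)(x) = f(x)` for `x > 0`. -/
theorem RLderiv_RLint
    (α : ℝ) (hα0 : 0 < α) (hα1 : α < 1)
    (f : ℝ → ℝ) (hf : ContinuousOn f (Set.Ici 0)) :
    ∀ x > (0:ℝ), RLderiv α (RLint α f) x = f x := by
  intro x hx
  have hcont : ∀ y ∈ Set.Ioi (0:ℝ), ContinuousAt f y := fun y hy =>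
    hf.continuousAt (mem_nhds_iff.mpr ⟨Set.Ioi 0, Set.Ioi_subset_Ici_self, isOpen_Ioi, hy⟩)
  have hEq : (fun u => ∫ t in (0:ℝ)..u, (u - t) ^ (-α) * RLint α f t)
      =ᶠ[nhds x] fun u => Real.Gamma (1 - α) * ∫ s in (0:ℝ)..u, f s := by
    filter_upwards [isOpen_Ioi.mem_nhds hx] with u hu
    exact key hα0 hα1 hf hu
  have hderiv : HasDerivAt (fun u => ∫ s in (0:ℝ)..u, f s) (f x) x := by
    apply intervalIntegral.integral_hasDerivAt_right
    · apply ContinuousOn.intervalIntegrable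
      apply hf.mono
      rw [Set.uIcc_of_le hx.le]
      exact fun y hy => hy.1
    · exact ContinuousAt.stronglyMeasurableAtFilter isOpen_Ioi hcont x hx
    · exact hcont x hx
  have hΓ : Real.Gamma (1 - α) ≠ 0 := (Real.Gamma_pos_of_pos (by linarith)).ne'
  rw [RLderiv, hEq.deriv_eq, ((hderiv.const_mul (Real.Gamma (1 - α)))).deriv]
  field_simp
end
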